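/- For every initial radius R₀ > 0, every target radius R_T > 0 and every final time T > 0, there exist a continuously differentiable function R : [0,T] → (0,∞) with R(0) = R₀ and R(T) = R_T, a continuous function u_m : [0,T] → ℝ, and a function u : [0,T] × ℝ² → ℝ such that the pair (u, R) follows the one-phase Stefan dynamics with melting temperature u_m. In other words, there exists a temperature trajectory u_m(t) that transforms, through the Stefan dynamics, the initial disk of radius R₀ into a disk of radius R_T at time T. -/

import Mathlib

open Set

/-- The spatial Laplacian of `u : ℝ² → ℝ` at `x`: the trace of the Hessian,
computed in the standard orthonormal basis of `EuclideanSpace ℝ (Fin 2)`. -/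
noncomputable def laplacian (u : EuclideanSpace ℝ (Fin 2) → ℝ)
    (x : EuclideanSpace ℝ (Fin 2)) : ℝ :=
  ∑ i : Fin 2,
    fderiv ℝ (fun y => fderiv ℝ u y (EuclideanSpace.basisFun (Fin 2) ℝ i)) x
      (EuclideanSpace.basisFun (Fin 2) ℝ i)

/-- The pair `(u, R)` follows the one-phase Stefan dynamics with melting temperature
`u_m` on the time interval `[0, T]`, on the moving-disk tube
`{(t, x) : 0 < t < T, ‖x‖ < R t}`: `u` admits the required time derivative and spatial
second derivatives at each point of the tube, and
(i) the heat equation `∂ₜu = Δu` holds in the tube,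
(ii) `u(t, x) = u_m(t)` on the lateral boundary `‖x‖ = R t`,
(iii) the Stefan condition `R'(t) = -⟨∇u(t,x), x/‖x‖⟩` holds on the lateral boundary. -/
def FollowsStefanDynamics (T : ℝ) (u : ℝ → EuclideanSpace ℝ (Fin 2) → ℝ)
    (R : ℝ → ℝ) (u_m : ℝ → ℝ) : Prop :=
  (∀ t ∈ Ioo (0 : ℝ) T, ∀ x : EuclideanSpace ℝ (Fin 2), ‖x‖ < R t →
    DifferentiableAt ℝ (fun s => u s x) t ∧
    DifferentiableAt ℝ (u t) x ∧
    DifferentiableAt ℝ (fun y => fderiv ℝ (u t) y) x) ∧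
  (∀ t ∈ Ioo (0 : ℝ) T, ∀ x : EuclideanSpace ℝ (Fin 2), ‖x‖ < R t →
    deriv (fun s => u s x) t = laplacian (u t) x) ∧
  (∀ t ∈ Icc (0 : ℝ) T, ∀ x : EuclideanSpace ℝ (Fin 2), ‖x‖ = R t →
    u t x = u_m t) ∧
  (∀ t ∈ Ioo (0 : ℝ) T, ∀ x : EuclideanSpace ℝ (Fin 2), ‖x‖ = R t →
    deriv R t = -(inner ℝ (gradient (u t) x) ((‖x‖)⁻¹ • x) : ℝ))

section aux

local notation "E2" => EuclideanSpace ℝ (Fin 2)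

/-- derivative of `y ↦ b⟪y,y⟫ + c` -/
lemma stefan_aux_hasFDerivAt (b c : ℝ) (x : E2) :
    HasFDerivAt (fun y : E2 => c + b * (inner ℝ y y : ℝ)) ((2 * b) • innerSL ℝ x) x := by
  have h1 : HasFDerivAt (fun y : E2 => (inner ℝ y y : ℝ))
      ((fderivInnerCLM ℝ (x, x)).comp ((ContinuousLinearMap.id ℝ E2).prod
        (ContinuousLinearMap.id ℝ E2))) x :=
    (hasFDerivAt_id x).inner ℝ (hasFDerivAt_id x)
  have h2 := (h1.const_mul b).const_add c
  refine h2.congr_fderiv ?_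
  ext v
  simp [fderivInnerCLM_apply, real_inner_comm x v]
  ring

lemma stefan_aux_fderiv (b c : ℝ) (x : E2) :
    fderiv ℝ (fun y : E2 => c + b * (inner ℝ y y : ℝ)) x = (2 * b) • innerSL ℝ x :=
  (stefan_aux_hasFDerivAt b c x).fderiv

end aux

/-- For any initial radius `R₀ > 0`, target radius `R_T > 0` and final time `T > 0`,
there exists a melting-temperature trajectory `u_m` transforming, through the Stefan
dynamics, the disk of radius `R₀` at time `0` into the disk of radius `R_T` at time `T`. -/
theorem stefan_disk_to_disk (R₀ R_T T : ℝ) (hR₀ : 0 < R₀) (hRT : 0 < R_T) (hT : 0 < T) :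
    ∃ (R : ℝ → ℝ) (u_m : ℝ → ℝ) (u : ℝ → EuclideanSpace ℝ (Fin 2) → ℝ),
      ContDiffOn ℝ 1 R (Icc 0 T) ∧
      (∀ t ∈ Icc (0 : ℝ) T, 0 < R t) ∧
      R 0 = R₀ ∧ R T = R_T ∧
      ContinuousOn u_m (Icc 0 T) ∧
      FollowsStefanDynamics T u R u_m := by
  set b : ℝ := Real.log (R₀ / R_T) / (2 * T) with hb
  set R : ℝ → ℝ := fun t => R₀ * Real.exp (-(2 * b) * t) with hRdef
  set u : ℝ → EuclideanSpace ℝ (Fin 2) → ℝ :=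
    fun t x => 4 * b * t + b * (inner ℝ x x : ℝ) with hudef
  set u_m : ℝ → ℝ := fun t => 4 * b * t + b * (R t) ^ 2 with humdef
  have hRpos : ∀ t, 0 < R t := fun t => mul_pos hR₀ (Real.exp_pos _)
  -- derivative of R
  have hR' : ∀ t, HasDerivAt R (-(2 * b) * R t) t := by
    intro t
    have h := (((hasDerivAt_id t).const_mul (-(2 * b))).exp).const_mul R₀
    simp only [id_eq, mul_one] at h
    refine h.congr_deriv ?_
    simp only [hRdef]
    ring
  have hRsmooth : ContDiff ℝ 1 R := by
    apply ContDiff.mul contDiff_const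
    exact (contDiff_const.mul contDiff_id).exp
  -- fderiv of u t
  have hfd : ∀ t (x : EuclideanSpace ℝ (Fin 2)),
      fderiv ℝ (u t) x = (2 * b) • innerSL ℝ x := fun t x =>
    stefan_aux_fderiv b (4 * b * t) x
  refine ⟨R, u_m, u, hRsmooth.contDiffOn, fun t _ => hRpos t, ?_, ?_, ?_, ?_, ?_, ?_, ?_⟩
  · simp [hRdef]
  · -- R T = R_T
    have h2T : (2 : ℝ) * T ≠ 0 := by positivity
    have : -(2 * b) * T = Real.log (R_T / R₀) := by
      rw [hb, show R_T / R₀ = (R₀ / R_T)⁻¹ by rw [inv_div], Real.log_inv]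
      field_simp
    rw [hRdef]
    simp only [this, Real.exp_log (div_pos hRT hR₀)]
    field_simp
  · -- continuity of u_m
    apply Continuous.continuousOn
    fun_prop
  · -- differentiability
    intro t ht x hx
    refine ⟨?_, ?_, ?_⟩
    · exact (differentiableAt_id.const_mul _).add_const _
    · exact ((stefan_aux_hasFDerivAt b (4 * b * t) x).differentiableAt)
    · have hcd : ContDiff ℝ 2 (u t) := by
        apply ContDiff.add contDiff_const
        exact ContDiff.mul contDiff_const (contDiff_id.inner ℝ contDiff_id)
      have := (hcd.fderiv_right (m := 1) (by norm_num)).differentiable (by norm_num)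
      exact this.differentiableAt
  · -- heat equation
    intro t ht x hx
    have hL : deriv (fun s => u s x) t = 4 * b := by
      have h := ((hasDerivAt_id t).const_mul (4 * b)).add_const (b * (inner ℝ x x : ℝ))
      simp only [id_eq, mul_one] at h
      exact h.deriv
    rw [hL, laplacian]
    have hterm : ∀ i : Fin 2,
        fderiv ℝ (fun y => fderiv ℝ (u t) y (EuclideanSpace.basisFun (Fin 2) ℝ i)) x
          (EuclideanSpace.basisFun (Fin 2) ℝ i) = 2 * b := by
      intro i
      set e : EuclideanSpace ℝ (Fin 2) := EuclideanSpace.basisFun (Fin 2) ℝ i with he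
      have hee : (inner ℝ e e : ℝ) = 1 := by
        have hnorm : ‖e‖ = 1 := (EuclideanSpace.basisFun (Fin 2) ℝ).orthonormal.1 i
        rw [real_inner_self_eq_norm_sq, hnorm]; norm_num
      have heq : (fun y : EuclideanSpace ℝ (Fin 2) => fderiv ℝ (u t) y e)
          = fun y => (2 * b) * (inner ℝ e y : ℝ) := by
        funext y
        rw [hfd t y]
        simp only [ContinuousLinearMap.coe_smul', Pi.smul_apply, innerSL_apply_apply, smul_eq_mul]
        rw [real_inner_comm]
      rw [heq]
      have h1 : HasFDerivAt (fun y : EuclideanSpace ℝ (Fin 2) => (2 * b) * (inner ℝ e y : ℝ))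
          ((2 * b) • innerSL ℝ e) x := by
        exact ((innerSL ℝ e).hasFDerivAt (x := x)).const_mul (2 * b)
      rw [h1.fderiv]
      simp only [ContinuousLinearMap.coe_smul', Pi.smul_apply, innerSL_apply_apply, smul_eq_mul,
        hee, mul_one]
    rw [Finset.sum_congr rfl (fun i _ => hterm i)]
    simp [Fin.sum_univ_two]
    ring
  · -- boundary value
    intro t ht x hx
    simp only [hudef, humdef, real_inner_self_eq_norm_sq, hx]
  · -- Stefan condition
    intro t ht x hx
    have hxpos : 0 < ‖x‖ := hx ▸ hRpos t
    have hgrad : (inner ℝ (gradient (u t) x) ((‖x‖)⁻¹ • x) : ℝ)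
        = fderiv ℝ (u t) x ((‖x‖)⁻¹ • x) := by
      rw [gradient]
      exact InnerProductSpace.toDual_symm_apply
    rw [(hR' t).deriv, hgrad, hfd t x]
    simp only [ContinuousLinearMap.coe_smul', Pi.smul_apply, innerSL_apply_apply,
      real_inner_smul_right, real_inner_self_eq_norm_sq, smul_eq_mul, hx]
    have : (R t)⁻¹ * R t ^ 2 = R t := by
      field_simp
    rw [this]
    ring
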